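/- (ResInter₂) In the muddy children axiomatization with m+1 muddy children: ⊢ [¤] TRUE → [*]^m E_G λ_{m+1}, i.e., after Father's announcement and m repetitions of his injunction, every child knows there are at least m+1 muddy children. -/

import Mathlib

/-- Formulas of dynamic epistemic logic with common knowledge. -/
inductive Form (Atom Agent Event : Type) : Type
  | atom : Atom → Form Atom Agent Event
  | tru  : Form Atom Agent Event
  | imp  : Form Atom Agent Event → Form Atom Agent Event → Form Atom Agent Event
  | and  : Form Atom Agent Event → Form Atom Agent Event → Form Atom Agent Event
  | or   : Form Atom Agent Event → Form Atom Agent Event → Form Atom Agent Event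
  | not  : Form Atom Agent Event → Form Atom Agent Event
  | K    : Agent → Form Atom Agent Event → Form Atom Agent Event
  | C    : List Agent → Form Atom Agent Event → Form Atom Agent Event
  | E    : List Agent → Form Atom Agent Event → Form Atom Agent Event
  | box  : Event → Form Atom Agent Event → Form Atom Agent Event

namespace Form

variable {Atom Agent Event : Type}

def iff (p q : Form Atom Agent Event) : Form Atom Agent Event :=
  Form.and (Form.imp p q) (Form.imp q p)

/-- The conjunction ⋀_{i ∈ G} K_i p. -/
def conjK (G : List Agent) (p : Form Atom Agent Event) : Form Atom Agent Event :=
  match G with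
  | [] => Form.tru
  | i :: G' => Form.and (Form.K i p) (conjK G' p)

/-- Classical boolean evaluation, treating atoms and modal subformulas as opaque
(evaluated by the valuation `v`).  A formula is a classical tautology iff it
evaluates to `true` under every such valuation. -/
def evalC (v : Form Atom Agent Event → Bool) : Form Atom Agent Event → Bool
  | Form.tru => true
  | Form.imp p q => !(evalC v p) || evalC v q
  | Form.and p q => evalC v p && evalC v q
  | Form.or p q => evalC v p || evalC v q
  | Form.not p => !(evalC v p)
  | p => v p

/-- Hilbert-style derivability for the system 𝒯^{C[α]}_G, with an extra set `Ax`
of proper axioms. -/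
inductive Prf (Ax : Form Atom Agent Event → Prop) : Form Atom Agent Event → Prop
  | ax {p} : Ax p → Prf Ax p
  | taut {p} : (∀ v, evalC v p = true) → Prf Ax p
  | mp {p q} : Prf Ax p → Prf Ax (Form.imp p q) → Prf Ax q
  | kK (i : Agent) (p q : Form Atom Agent Event) :
      Prf Ax (Form.imp (Form.K i p) (Form.imp (Form.K i (Form.imp p q)) (Form.K i q)))
  | tK (i : Agent) (p : Form Atom Agent Event) : Prf Ax (Form.imp (Form.K i p) p)
  | genK (i : Agent) {p} : Prf Ax p → Prf Ax (Form.K i p)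
  | kBox (a : Event) (p q : Form Atom Agent Event) :
      Prf Ax (Form.imp (Form.box a p) (Form.imp (Form.box a (Form.imp p q)) (Form.box a q)))
  | tBox (a : Event) (p : Form Atom Agent Event) : Prf Ax (Form.imp (Form.box a p) p)
  | genBox (a : Event) {p} : Prf Ax p → Prf Ax (Form.box a p)
  | defE (G : List Agent) (p : Form Atom Agent Event) :
      Prf Ax (Form.iff (Form.E G p) (Form.conjK G p))
  | fixC (G : List Agent) (p : Form Atom Agent Event) :
      Prf Ax (Form.imp (Form.C G p) (Form.and p (Form.E G (Form.C G p))))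
  | gfpC {G : List Agent} {p r : Form Atom Agent Event} :
      Prf Ax (Form.imp r (Form.and p (Form.E G r))) → Prf Ax (Form.imp r (Form.C G p))
  | kt1 (i : Agent) (a : Event) (p : Form Atom Agent Event) :
      Prf Ax (Form.imp (Form.K i (Form.box a p)) (Form.box a (Form.K i p)))

/-- n-fold iterated shared knowledge E_G^n. -/
def iterE (G : List Agent) : ℕ → Form Atom Agent Event → Form Atom Agent Event
  | 0, p => p
  | n+1, p => Form.E G (iterE G n p)

/-- k-fold iterated dynamic modality [α]^k. -/
def iterBox (a : Event) : ℕ → Form Atom Agent Event → Form Atom Agent Event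
  | 0, p => p
  | n+1, p => Form.box a (iterBox a n p)

end Form

/-- The empty set of proper axioms. -/
def NoAx {Atom Agent Event : Type} : Form Atom Agent Event → Prop := fun _ => False

/-- Atomic propositions of the muddy children puzzle. -/
inductive MCAtom : Type
  | lam : ℕ → MCAtom   -- at least j children are muddy
  | eps : ℕ → MCAtom   -- exactly j children are muddy
  | mu  : ℕ → MCAtom   -- child i is muddy

abbrev MForm (Event : Type) := Form MCAtom ℕ Event

def lam {Event : Type} (j : ℕ) : MForm Event := Form.atom (MCAtom.lam j)
def eps {Event : Type} (j : ℕ) : MForm Event := Form.atom (MCAtom.eps j)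
def mud {Event : Type} (i : ℕ) : MForm Event := Form.atom (MCAtom.mu i)
section Toolkit
variable {Atom Agent Event : Type} {Ax : Form Atom Agent Event → Prop}
open Form

lemma impTrans {p q r : Form Atom Agent Event} (h1 : Prf Ax (p.imp q)) (h2 : Prf Ax (q.imp r)) :
    Prf Ax (p.imp r) := by
  have t : Prf Ax ((p.imp q).imp ((q.imp r).imp (p.imp r))) := by
    apply Prf.taut; intro v; simp only [Form.evalC]
    cases Form.evalC v p <;> cases Form.evalC v q <;> cases Form.evalC v r <;> rfl
  exact h2.mp (h1.mp t)

lemma impIntro {p q : Form Atom Agent Event} (h : Prf Ax q) : Prf Ax (p.imp q) := by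
  have t : Prf Ax (q.imp (p.imp q)) := by
    apply Prf.taut; intro v; simp only [Form.evalC]
    cases Form.evalC v p <;> cases Form.evalC v q <;> rfl
  exact h.mp t

lemma swapArg {a b c : Form Atom Agent Event} (hb : Prf Ax b) (h : Prf Ax (a.imp (b.imp c))) :
    Prf Ax (a.imp c) := by
  have t : Prf Ax (b.imp ((a.imp (b.imp c)).imp (a.imp c))) := by
    apply Prf.taut; intro v; simp only [Form.evalC]
    cases Form.evalC v a <;> cases Form.evalC v b <;> cases Form.evalC v c <;> rfl
  exact h.mp (hb.mp t)

lemma andIntroImp {a p q : Form Atom Agent Event} (h1 : Prf Ax (a.imp p)) (h2 : Prf Ax (a.imp q)) :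
    Prf Ax (a.imp (p.and q)) := by
  have t : Prf Ax ((a.imp p).imp ((a.imp q).imp (a.imp (p.and q)))) := by
    apply Prf.taut; intro v; simp only [Form.evalC]
    cases Form.evalC v a <;> cases Form.evalC v p <;> cases Form.evalC v q <;> rfl
  exact h2.mp (h1.mp t)

lemma andLeftImp {p q : Form Atom Agent Event} : Prf Ax ((p.and q).imp p) := by
  apply Prf.taut; intro v; simp only [Form.evalC]
  cases Form.evalC v p <;> cases Form.evalC v q <;> rfl

lemma andRightImp {p q : Form Atom Agent Event} : Prf Ax ((p.and q).imp q) := by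
  apply Prf.taut; intro v; simp only [Form.evalC]
  cases Form.evalC v p <;> cases Form.evalC v q <;> rfl

lemma andMonoImp {p p' q q' : Form Atom Agent Event}
    (h1 : Prf Ax (p.imp p')) (h2 : Prf Ax (q.imp q')) :
    Prf Ax ((p.and q).imp (p'.and q')) := by
  have t : Prf Ax ((p.imp p').imp ((q.imp q').imp ((p.and q).imp (p'.and q')))) := by
    apply Prf.taut; intro v; simp only [Form.evalC]
    cases Form.evalC v p <;> cases Form.evalC v p' <;> cases Form.evalC v q <;>
      cases Form.evalC v q' <;> rfl
  exact h2.mp (h1.mp t)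

lemma andReshuffle {a b c d x y : Form Atom Agent Event}
    (h1 : Prf Ax ((a.and b).imp x)) (h2 : Prf Ax ((c.and d).imp y)) :
    Prf Ax (((a.and c).and (b.and d)).imp (x.and y)) := by
  have t : Prf Ax (((a.and b).imp x).imp (((c.and d).imp y).imp
      (((a.and c).and (b.and d)).imp (x.and y)))) := by
    apply Prf.taut; intro v; simp only [Form.evalC]
    cases Form.evalC v a <;> cases Form.evalC v b <;> cases Form.evalC v c <;>
      cases Form.evalC v d <;> cases Form.evalC v x <;> cases Form.evalC v y <;> rfl
  exact h2.mp (h1.mp t)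

lemma combAnd {a b x y : Form Atom Agent Event}
    (h1 : Prf Ax (a.imp x)) (h2 : Prf Ax (b.imp (x.imp y))) :
    Prf Ax ((a.and b).imp y) := by
  have t : Prf Ax ((a.imp x).imp ((b.imp (x.imp y)).imp ((a.and b).imp y))) := by
    apply Prf.taut; intro v; simp only [Form.evalC]
    cases Form.evalC v a <;> cases Form.evalC v b <;> cases Form.evalC v x <;>
      cases Form.evalC v y <;> rfl
  exact h2.mp (h1.mp t)

lemma iffLeft {p q : Form Atom Agent Event} (h : Prf Ax (Form.iff p q)) : Prf Ax (p.imp q) :=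
  h.mp (andLeftImp (p := p.imp q) (q := q.imp p))

lemma iffRight {p q : Form Atom Agent Event} (h : Prf Ax (Form.iff p q)) : Prf Ax (q.imp p) :=
  h.mp (andRightImp (p := p.imp q) (q := q.imp p))

lemma epsLem {e l l' : Form Atom Agent Event}
    (h : Prf Ax (Form.iff e (l.and (Form.not l')))) :
    Prf Ax ((l.and (Form.not e)).imp l') := by
  have t : Prf Ax ((Form.iff e (l.and (Form.not l'))).imp ((l.and (Form.not e)).imp l')) := by
    apply Prf.taut; intro v; simp only [Form.iff, Form.evalC]
    cases Form.evalC v e <;> cases Form.evalC v l <;> cases Form.evalC v l' <;> rfl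
  exact h.mp t

lemma KMono (i : Agent) {p q : Form Atom Agent Event} (h : Prf Ax (p.imp q)) :
    Prf Ax ((Form.K i p).imp (Form.K i q)) :=
  swapArg (Prf.genK i h) (Prf.kK i p q)

lemma boxMono (a : Event) {p q : Form Atom Agent Event} (h : Prf Ax (p.imp q)) :
    Prf Ax ((Form.box a p).imp (Form.box a q)) :=
  swapArg (Prf.genBox a h) (Prf.kBox a p q)

lemma KAnd (i : Agent) {p q : Form Atom Agent Event} :
    Prf Ax (((Form.K i p).and (Form.K i q)).imp (Form.K i (p.and q))) := by
  have h1 : Prf Ax ((Form.K i p).imp (Form.K i (q.imp (p.and q)))) := by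
    apply KMono; apply Prf.taut; intro v; simp only [Form.evalC]
    cases Form.evalC v p <;> cases Form.evalC v q <;> rfl
  exact combAnd h1 (Prf.kK i q (p.and q))

lemma boxAnd (a : Event) {p q : Form Atom Agent Event} :
    Prf Ax (((Form.box a p).and (Form.box a q)).imp (Form.box a (p.and q))) := by
  have h1 : Prf Ax ((Form.box a p).imp (Form.box a (q.imp (p.and q)))) := by
    apply boxMono; apply Prf.taut; intro v; simp only [Form.evalC]
    cases Form.evalC v p <;> cases Form.evalC v q <;> rfl
  exact combAnd h1 (Prf.kBox a q (p.and q))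

lemma conjKT {G : List Agent} (hG : G ≠ []) (p : Form Atom Agent Event) :
    Prf Ax ((Form.conjK G p).imp p) := by
  cases G with
  | nil => exact absurd rfl hG
  | cons i G' => exact impTrans (andLeftImp (p := Form.K i p) (q := Form.conjK G' p)) (Prf.tK i p)

lemma conjKMono (G : List Agent) {p q : Form Atom Agent Event} (h : Prf Ax (p.imp q)) :
    Prf Ax ((Form.conjK G p).imp (Form.conjK G q)) := by
  induction G with
  | nil =>
      apply Prf.taut; intro v; simp only [Form.conjK, Form.evalC]; rfl
  | cons i G' ih => exact andMonoImp (KMono i h) ih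

lemma conjKAnd (G : List Agent) {p q : Form Atom Agent Event} :
    Prf Ax (((Form.conjK G p).and (Form.conjK G q)).imp (Form.conjK G (p.and q))) := by
  induction G with
  | nil =>
      apply Prf.taut; intro v; simp only [Form.conjK, Form.evalC]; rfl
  | cons i G' ih => exact andReshuffle (KAnd i) ih

lemma conjKBox (G : List Agent) (a : Event) {p : Form Atom Agent Event} :
    Prf Ax ((Form.conjK G (Form.box a p)).imp (Form.box a (Form.conjK G p))) := by
  induction G with
  | nil =>
      exact impIntro (Prf.genBox a (by apply Prf.taut; intro v; simp only [Form.conjK, Form.evalC]))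
  | cons i G' ih =>
      exact impTrans (andMonoImp (Prf.kt1 i a p) ih) (boxAnd a)

lemma EtoConj (G : List Agent) (p : Form Atom Agent Event) :
    Prf Ax ((Form.E G p).imp (Form.conjK G p)) := iffLeft (Prf.defE G p)

lemma conjToE (G : List Agent) (p : Form Atom Agent Event) :
    Prf Ax ((Form.conjK G p).imp (Form.E G p)) := iffRight (Prf.defE G p)

lemma EMono (G : List Agent) {p q : Form Atom Agent Event} (h : Prf Ax (p.imp q)) :
    Prf Ax ((Form.E G p).imp (Form.E G q)) :=
  impTrans (impTrans (EtoConj G p) (conjKMono G h)) (conjToE G q)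

lemma EAnd (G : List Agent) {p q : Form Atom Agent Event} :
    Prf Ax (((Form.E G p).and (Form.E G q)).imp (Form.E G (p.and q))) :=
  impTrans (impTrans (andMonoImp (EtoConj G p) (EtoConj G q)) (conjKAnd G)) (conjToE G (p.and q))

lemma EBox (G : List Agent) (a : Event) {p : Form Atom Agent Event} :
    Prf Ax ((Form.E G (Form.box a p)).imp (Form.box a (Form.E G p))) :=
  impTrans (EtoConj G _) (impTrans (conjKBox G a) (boxMono a (conjToE G p)))

lemma ET {G : List Agent} (hG : G ≠ []) (p : Form Atom Agent Event) :
    Prf Ax ((Form.E G p).imp p) :=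
  impTrans (EtoConj G p) (conjKT hG p)

lemma CtoIterE (G : List Agent) (p : Form Atom Agent Event) (n : ℕ) :
    Prf Ax ((Form.C G p).imp (Form.iterE G n p)) := by
  induction n with
  | zero => exact impTrans (Prf.fixC G p) andLeftImp
  | succ n ih =>
      have h1 : Prf Ax ((Form.C G p).imp (Form.E G (Form.C G p))) :=
        impTrans (Prf.fixC G p) andRightImp
      exact impTrans h1 (EMono G ih)

lemma iterE_succ' (G : List Agent) :
    ∀ (n : ℕ) (p : Form Atom Agent Event),
      Form.iterE G (n+1) p = Form.iterE G n (Form.E G p)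
  | 0, p => rfl
  | n+1, p => by
      show Form.E G (Form.iterE G (n+1) p) = Form.E G (Form.iterE G n (Form.E G p))
      rw [iterE_succ' G n p]

lemma iterEMono (G : List Agent) (n : ℕ) {p q : Form Atom Agent Event} (h : Prf Ax (p.imp q)) :
    Prf Ax ((Form.iterE G n p).imp (Form.iterE G n q)) := by
  induction n with
  | zero => exact h
  | succ n ih => exact EMono G ih

lemma iterEBox (G : List Agent) (a : Event) (n : ℕ) {p : Form Atom Agent Event} :
    Prf Ax ((Form.iterE G n (Form.box a p)).imp (Form.box a (Form.iterE G n p))) := by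
  induction n with
  | zero =>
      apply Prf.taut; intro v; simp only [Form.iterE, Form.evalC]
      cases v (Form.box a p) <;> rfl
  | succ n ih => exact impTrans (EMono G ih) (EBox G a)

lemma iterBox_succ' (a : Event) :
    ∀ (n : ℕ) (p : Form Atom Agent Event),
      Form.iterBox a (n+1) p = Form.iterBox a n (Form.box a p)
  | 0, p => rfl
  | n+1, p => by
      show Form.box a (Form.iterBox a (n+1) p) = Form.box a (Form.iterBox a n (Form.box a p))
      rw [iterBox_succ' a n p]

lemma iterBoxMono (a : Event) (n : ℕ) {p q : Form Atom Agent Event} (h : Prf Ax (p.imp q)) :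
    Prf Ax ((Form.iterBox a n p).imp (Form.iterBox a n q)) := by
  induction n with
  | zero => exact h
  | succ n ih => exact boxMono a ih

end Toolkit

/-- (ResInter₂) With m+1 muddy children: ⊢ [¤] TRUE → [*]^m E_G λ_{m+1}. -/
theorem resInter2 {Event : Type} (Ax : MForm Event → Prop)
    (G : List ℕ) (hG : G ≠ []) (pt st : Event) (m : ℕ)
    (hMC11 : Form.Prf Ax (Form.imp (Form.box pt Form.tru) (Form.C G (lam 1))))
    (hMC2 : ∀ j : ℕ, 1 ≤ j →
      Form.Prf Ax (Form.imp (Form.E G (Form.E G (lam j)))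
        (Form.box st (Form.E G (Form.not (eps j))))))
    (hPers : ∀ j : ℕ, Form.Prf Ax (Form.imp (lam j) (Form.box st (lam j))))
    (hEQ : ∀ j : ℕ, Form.Prf Ax (Form.iff (eps j) (Form.and (lam j) (Form.not (lam (j+1)))))) :
    Form.Prf Ax (Form.imp (Form.box pt Form.tru)
      (Form.iterBox st m (Form.E G (lam (m+1))))) := by
  set pt' : MForm Event := Form.box pt Form.tru with hpt'
  -- key inner step: E E λ_{j} → [*] E λ_{j+1}, for j = k+1
  have step1 : ∀ k : ℕ, Form.Prf Ax
      ((Form.E G (Form.E G (lam (k+1)))).imp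
        (Form.box st (Form.E G (lam (k+2))))) := by
    intro k
    have a1 : Form.Prf Ax ((Form.E G (Form.E G (lam (k+1)))).imp (Form.E G (lam (k+1)))) :=
      ET hG _
    have a2 : Form.Prf Ax ((Form.E G (lam (k+1))).imp (Form.E G (Form.box st (lam (k+1))))) :=
      EMono G (hPers (k+1))
    have a4 : Form.Prf Ax ((Form.E G (Form.E G (lam (k+1)))).imp
        (Form.box st (Form.E G (lam (k+1))))) :=
      impTrans a1 (impTrans a2 (EBox G st))
    have a5 : Form.Prf Ax ((Form.E G (Form.E G (lam (k+1)))).imp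
        (Form.box st (Form.E G (Form.not (eps (k+1)))))) := hMC2 (k+1) (Nat.succ_le_succ (Nat.zero_le k))
    have a7 : Form.Prf Ax (((lam (k+1)).and (Form.not (eps (k+1)))).imp (lam (k+2))) :=
      epsLem (hEQ (k+1))
    have a10 : Form.Prf Ax ((Form.box st ((Form.E G (lam (k+1))).and
        (Form.E G (Form.not (eps (k+1)))))).imp (Form.box st (Form.E G (lam (k+2))))) :=
      boxMono st (impTrans (EAnd G) (EMono G a7))
    exact impTrans (impTrans (andIntroImp a4 a5) (boxAnd st)) a10
  have claim : ∀ k : ℕ, k ≤ m → Form.Prf Ax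
      (pt'.imp (Form.iterBox st k (Form.iterE G (m - k) (Form.E G (lam (k+1)))))) := by
    intro k
    induction k with
    | zero =>
        intro _
        have h := CtoIterE (Ax := Ax) G (lam 1) (m+1)
        rw [iterE_succ'] at h
        simpa [Form.iterBox] using impTrans hMC11 h
    | succ k ih =>
        intro hk1
        have hk := ih (Nat.le_of_succ_le hk1)
        have e1 : (Form.iterE G (m - k) (Form.E G (lam (k+1))) : MForm Event)
            = Form.iterE G (m - (k+1)) (Form.E G (Form.E G (lam (k+1)))) := by
          have h2 : m - k = (m - (k+1)) + 1 := by omega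
          rw [h2, iterE_succ']
        rw [e1] at hk
        have step2 : Form.Prf Ax
            ((Form.iterE G (m - (k+1)) (Form.E G (Form.E G (lam (k+1))))).imp
              (Form.box st (Form.iterE G (m - (k+1)) (Form.E G (lam (k+2)))))) :=
          impTrans (iterEMono G _ (step1 k)) (iterEBox G st _)
        have lift := iterBoxMono (Ax := Ax) st k step2
        rw [show (k + 1 + 1 : ℕ) = k + 2 from rfl, iterBox_succ']
        exact impTrans hk lift
  have h := claim m le_rfl
  rw [Nat.sub_self] at h
  exact h
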